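/- The hyperkähler quotient of ℍ⊗𝔲(k) by the adjoint action of U(k) at level zero is Sym^k ℍ: the set of ξ ∈ ℍ⊗𝔲(k) with all components pairwise commuting, modulo simultaneous conjugation by U(k), is in natural bijection with the k-fold symmetric product ℍᵏ/S_k, via the joint spectrum map ξ ↦ {v₁, ..., v_k}. -/

import Mathlib

open scoped Matrix

noncomputable section

/-- The zero locus `μ⁻¹(0)` of the hyperkähler moment map for the adjoint action of
`U(k)` on `ℍ ⊗ 𝔲(k)`: quadruples of skew-Hermitian matrices whose components pairwise
commute. -/
def ADHMAdjointZeroLocus (k : ℕ) : Type :=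
  {ξ : Fin 4 → Matrix (Fin k) (Fin k) ℂ //
    (∀ α, (ξ α)ᴴ = -ξ α) ∧ ∀ α β, ξ α * ξ β = ξ β * ξ α}

/-- Simultaneous conjugation by `U(k)`. -/
def unitaryConjRel (k : ℕ) (ξ η : ADHMAdjointZeroLocus k) : Prop :=
  ∃ U : Matrix.unitaryGroup (Fin k) ℂ, ∀ α,
    η.val α = (U : Matrix (Fin k) (Fin k) ℂ) * ξ.val α
      * star (U : Matrix (Fin k) (Fin k) ℂ)

/-- The permutation action of `S_k` on `ℍᵏ`; the quotient is `Sym^k ℍ = ℍᵏ/S_k`. -/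
def permRel (k : ℕ) (v w : Fin k → Quaternion ℝ) : Prop :=
  ∃ σ : Equiv.Perm (Fin k), w = v ∘ σ

namespace ADHMAux

variable {k : ℕ}

/-- eigen-data for an element of the zero locus -/
def IsEig (ξ : ADHMAdjointZeroLocus k) (e : Fin k → (Fin k → ℂ))
    (t : Fin k → Fin 4 → ℝ) : Prop :=
  (∀ i j, star (e i) ⬝ᵥ e j = if i = j then 1 else 0) ∧
  ∀ α i, (ξ.val α) *ᵥ e i = (((t i α : ℝ) : ℂ) * Complex.I) • e i

def quat (c : Fin 4 → ℝ) : Quaternion ℝ := ⟨c 0, c 1, c 2, c 3⟩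

lemma quat_injective : Function.Injective quat := by
  intro a b h
  rw [Quaternion.ext_iff] at h
  funext i
  fin_cases i <;> simp_all [quat]

def comp' (v : Quaternion ℝ) : Fin 4 → ℝ := ![v.re, v.imI, v.imJ, v.imK]

lemma quat_comp' (v : Quaternion ℝ) : quat (comp' v) = v := by
  simp [quat, comp', Quaternion.ext_iff]
  rfl

lemma dot_smul_sum (e : Fin k → (Fin k → ℂ))
    (horth : ∀ i j, star (e i) ⬝ᵥ e j = if i = j then 1 else 0)
    (g : Fin k → ℂ) (j : Fin k) :
    star (e j) ⬝ᵥ (∑ i, g i • e i) = g j := by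
  have : star (e j) ⬝ᵥ (∑ i, g i • e i) = ∑ i, g i * (star (e j) ⬝ᵥ e i) := by
    simp [dotProduct, Finset.sum_apply, Finset.mul_sum]
    rw [Finset.sum_comm]
    congr 1; funext i; congr 1; funext l; ring
  rw [this]
  simp [horth]

lemma li_of_orth {e : Fin k → (Fin k → ℂ)}
    (horth : ∀ i j, star (e i) ⬝ᵥ e j = if i = j then 1 else 0) :
    LinearIndependent ℂ e := by
  rw [Fintype.linearIndependent_iff]
  intro g hg i
  have := dot_smul_sum e horth g i
  rw [hg] at this
  simpa using this.symm

set_option maxHeartbeats 1000000 in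
lemma exists_isEig (ξ : ADHMAdjointZeroLocus k) : ∃ e t, IsEig ξ e t := by
  classical
  set A : Fin 4 → Matrix (Fin k) (Fin k) ℂ := fun α => (-Complex.I) • ξ.1 α with hA
  have hherm : ∀ α, (A α).IsHermitian := by
    intro α
    show (A α)ᴴ = A α
    rw [hA]
    simp only [Matrix.conjTranspose_smul, ξ.2.1 α, star_neg, Complex.star_def, Complex.conj_I]
    simp
  set T : Fin 4 → Module.End ℂ (EuclideanSpace ℂ (Fin k)) :=
    fun α => Matrix.toEuclideanLin (A α) with hT
  have hTapp : ∀ α (x : EuclideanSpace ℂ (Fin k)) (i : Fin k), (T α x) i = ((A α) *ᵥ x) i :=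
    fun _ _ _ => rfl
  have hsym : ∀ α, (T α).IsSymmetric := fun α => Matrix.isHermitian_iff_isSymmetric.mp (hherm α)
  have hcommM : ∀ α β, A α * A β = A β * A α := by
    intro α β
    rw [hA]
    simp only [Matrix.smul_mul, Matrix.mul_smul, ξ.2.2 α β]
  have hcomm : Pairwise (Function.onFun Commute T) := by
    intro α β _
    show T α * T β = T β * T α
    refine LinearMap.ext fun x => ?_
    show (T α (T β x)) = (T β (T α x))
    ext i
    show ((A α) *ᵥ ((A β) *ᵥ x)) i = ((A β) *ᵥ ((A α) *ᵥ x)) i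
    rw [Matrix.mulVec_mulVec, Matrix.mulVec_mulVec, hcommM]
  set V : (Fin 4 → ℂ) → Submodule ℂ (EuclideanSpace ℂ (Fin k)) :=
    fun χ => ⨅ α, Module.End.eigenspace (T α) (χ α) with hV
  have hInt : DirectSum.IsInternal V :=
    LinearMap.IsSymmetric.LinearMap.IsSymmetric.directSum_isInternal_of_pairwise_commute hsym hcomm
  have hOF := LinearMap.IsSymmetric.orthogonalFamily_iInf_eigenspaces (T := T) hsym
  haveI : Fintype {χ : Fin 4 → ℂ // V χ ≠ ⊥} :=
    (hInt.submodule_iSupIndep).fintypeNeBotOfFiniteDimensional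
  set W : {χ : Fin 4 → ℂ // V χ ≠ ⊥} → Submodule ℂ (EuclideanSpace ℂ (Fin k)) :=
    fun χ => V χ.1 with hW
  have hIntW : DirectSum.IsInternal W := by
    rw [DirectSum.isInternal_submodule_iff_iSupIndep_and_iSup_eq_top]
    constructor
    · exact (hInt.submodule_iSupIndep).comp Subtype.val_injective
    · have h1 : ⨆ χ, V χ = ⊤ :=
        (DirectSum.isInternal_submodule_iff_iSupIndep_and_iSup_eq_top V).mp hInt |>.2
      rw [← h1]
      apply le_antisymm
      · exact iSup_le fun χ => le_iSup V χ.1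
      · refine iSup_le fun χ => ?_
        by_cases h : V χ = ⊥
        · rw [h]; exact bot_le
        · exact le_iSup_of_le ⟨χ, h⟩ le_rfl
  have hOFW := hOF.comp (Subtype.val_injective (p := fun χ => V χ ≠ ⊥))
  have hrk : Module.finrank ℂ (EuclideanSpace ℂ (Fin k)) = k := finrank_euclideanSpace_fin
  set B := hIntW.subordinateOrthonormalBasis hrk hOFW with hB
  set χf : Fin k → (Fin 4 → ℂ) :=
    fun i => (hIntW.subordinateOrthonormalBasisIndex hrk i hOFW).1 with hχf
  have hmem : ∀ i, B i ∈ V (χf i) :=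
    fun i => hIntW.subordinateOrthonormalBasis_subordinate hrk i hOFW
  have heig : ∀ α i, T α (B i) = χf i α • B i := by
    intro α i
    have := (Submodule.mem_iInf _).mp (hmem i) α
    exact Module.End.mem_eigenspace_iff.mp this
  have hne : ∀ i, B i ≠ 0 := fun i => B.orthonormal.ne_zero i
  have hreal : ∀ i α, ((χf i α).re : ℂ) = χf i α := by
    intro i α
    apply Complex.conj_eq_iff_re.mp
    exact (hsym α).conj_eigenvalue_eq_self
      (Module.End.hasEigenvalue_of_hasEigenvector
        ⟨Module.End.mem_eigenspace_iff.mpr (heig α i), hne i⟩)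
  refine ⟨fun i => B i, fun i α => (χf i α).re, ?_, ?_⟩
  · intro i j
    have := orthonormal_iff_ite.mp B.orthonormal i j
    rw [← this]
    simp [dotProduct, PiLp.inner_apply, RCLike.inner_apply]
    exact Finset.sum_congr rfl fun _ _ => mul_comm _ _
  · intro α i
    have hx : ξ.1 α = Complex.I • A α := by
      rw [hA]; simp [smul_smul]
    funext l
    have h1 : ((ξ.1 α) *ᵥ (fun j => B i j)) l = Complex.I * (((A α) *ᵥ (B i)) l) := by
      rw [hx, Matrix.smul_mulVec]; rfl
    have h2 : ((A α) *ᵥ (B i)) l = (T α (B i)) l := rfl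
    rw [h1, h2, heig α i]
    show Complex.I * (χf i α • B i) l = _
    rw [← hreal i α]
    show Complex.I * (((χf i α).re : ℂ) * B i l) = (((χf i α).re : ℂ) * Complex.I) * B i l
    ring

set_option maxHeartbeats 1000000 in
lemma IsEig.card_fiber {ξ : ADHMAdjointZeroLocus k} {e : Fin k → (Fin k → ℂ)}
    {t : Fin k → Fin 4 → ℝ} (h : IsEig ξ e t) (q : Fin 4 → ℝ) :
    Nat.card {i // t i = q} =
      Module.finrank ℂ ↥(⨅ α, Module.End.eigenspace ((ξ.val α).mulVecLin)
        (((q α : ℝ) : ℂ) * Complex.I)) := by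
  classical
  have hli := li_of_orth h.1
  have hsp : Submodule.span ℂ (Set.range e) = ⊤ := by
    apply Submodule.eq_top_of_finrank_eq
    rw [finrank_span_eq_card hli]; simp [Module.finrank_pi]
  let B : Module.Basis (Fin k) ℂ (Fin k → ℂ) := Module.Basis.mk hli (by rw [hsp])
  have hBe : ∀ i, B i = e i := fun i => by simp [B]
  set EQ := (⨅ α, Module.End.eigenspace ((ξ.val α).mulVecLin)
    (((q α : ℝ) : ℂ) * Complex.I)) with hEQ
  set S : Set (Fin k) := {i | t i = q} with hS
  have hIneq : ∀ i, t i ≠ q → (∃ α, t i α ≠ q α) := by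
    intro i hi
    by_contra hc; push_neg at hc; exact hi (funext hc)
  have hcoef : ∀ x ∈ EQ, ∀ i, t i ≠ q → B.repr x i = 0 := by
    intro x hx i hi
    obtain ⟨α, hα⟩ := hIneq i hi
    have hx' : (ξ.val α) *ᵥ x = (((q α : ℝ) : ℂ) * Complex.I) • x := by
      have := (Submodule.mem_iInf _).mp hx α
      simpa [Matrix.mulVecLin_apply] using Module.End.mem_eigenspace_iff.mp this
    have hxe : x = ∑ j, B.repr x j • e j := by
      conv_lhs => rw [← B.sum_repr x]
      congr 1; funext j; rw [hBe]
    have l1 : (ξ.val α) *ᵥ x = ∑ j, (B.repr x j * (((t j α : ℝ):ℂ) * Complex.I)) • e j := by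
      conv_lhs => rw [hxe]
      rw [show ∀ v, (ξ.val α) *ᵥ v = (ξ.val α).mulVecLin v from fun _ => rfl, map_sum]
      congr 1; funext j
      rw [map_smul, Matrix.mulVecLin_apply, h.2 α j, smul_smul, mul_comm]
    have l2 : (ξ.val α) *ᵥ x = ∑ j, ((((q α : ℝ):ℂ) * Complex.I) * B.repr x j) • e j := by
      rw [hx']
      conv_lhs => rw [hxe]
      rw [Finset.smul_sum]
      congr 1; funext j; rw [smul_smul]
    have h1 : ∑ j, (B.repr x j * (((t j α : ℝ):ℂ) * Complex.I)
        - (((q α : ℝ):ℂ) * Complex.I) * B.repr x j) • e j = 0 := by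
      simp only [sub_smul, Finset.sum_sub_distrib, ← l1, ← l2, sub_self]
    have h2 := Fintype.linearIndependent_iff.mp hli _ h1 i
    have h3 : B.repr x i * ((((t i α : ℝ):ℂ) * Complex.I) - (((q α : ℝ):ℂ) * Complex.I)) = 0 := by
      rw [mul_sub]; rw [mul_comm (((q α : ℝ):ℂ) * Complex.I) (B.repr x i)] at h2; exact h2
    rcases mul_eq_zero.mp h3 with h4 | h4
    · exact h4
    · exfalso
      apply hα
      have := sub_eq_zero.mp h4
      exact_mod_cast mul_right_cancel₀ Complex.I_ne_zero this
  have hspan : EQ = Submodule.span ℂ (e '' S) := by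
    apply le_antisymm
    · intro x hx
      have himg : e '' S = ⇑B '' S := Set.image_congr fun i _ => (hBe i).symm
      rw [himg, Module.Basis.mem_span_image]
      intro i hi
      rw [Finset.mem_coe, Finsupp.mem_support_iff] at hi
      by_contra hiS
      exact hi (hcoef x hx i hiS)
    · rw [Submodule.span_le]
      rintro _ ⟨i, hiS, rfl⟩
      rw [SetLike.mem_coe, hEQ, Submodule.mem_iInf]
      intro α
      rw [Module.End.mem_eigenspace_iff, Matrix.mulVecLin_apply, h.2 α i]
      have : t i = q := hiS
      rw [this]
  have himg2 : e '' S = Set.range (fun i : S => e i.1) := Set.image_eq_range e S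
  have hfr : Module.finrank ℂ ↥EQ = Fintype.card S := by
    rw [hspan, himg2]
    exact finrank_span_eq_card (hli.comp Subtype.val Subtype.val_injective)
  rw [hfr, Nat.card_eq_fintype_card.symm]
  exact Nat.card_congr (Equiv.subtypeEquivRight fun _ => Iff.rfl)

lemma IsEig.exists_perm {ξ : ADHMAdjointZeroLocus k} {e f : Fin k → (Fin k → ℂ)}
    {t s : Fin k → Fin 4 → ℝ} (h1 : IsEig ξ e t) (h2 : IsEig ξ f s) :
    ∃ σ : Equiv.Perm (Fin k), ∀ j, s j = t (σ j) := by
  classical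
  have hcard : ∀ q, Nat.card {j // s j = q} = Nat.card {i // t i = q} := fun q => by
    rw [h2.card_fiber q, h1.card_fiber q]
  have hfe : ∀ q, {j // s j = q} ≃ {i // t i = q} := by
    intro q
    haveI : Fintype {j // s j = q} := Fintype.ofFinite _
    haveI : Fintype {i // t i = q} := Fintype.ofFinite _
    apply Fintype.equivOfCardEq
    rw [← Nat.card_eq_fintype_card, ← Nat.card_eq_fintype_card]
    exact hcard q
  exact ⟨Equiv.ofFiberEquiv hfe, fun j => (Equiv.ofFiberEquiv_map hfe j).symm⟩

def diagEl (t : Fin k → Fin 4 → ℝ) : ADHMAdjointZeroLocus k :=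
  ⟨fun α => Matrix.diagonal (fun i => ((t i α : ℝ) : ℂ) * Complex.I), by
    constructor
    · intro α
      rw [Matrix.diagonal_conjTranspose]
      have : star (fun i => ((t i α : ℝ) : ℂ) * Complex.I)
          = fun i => -(((t i α : ℝ) : ℂ) * Complex.I) := by
        funext i
        simp [Complex.star_def, Complex.conj_I]
      rw [this]
      simp [Matrix.diagonal_neg]
    · intro α β
      rw [Matrix.diagonal_mul_diagonal, Matrix.diagonal_mul_diagonal]
      ext i j
      by_cases h : i = j
      · subst h; rw [Matrix.diagonal_apply_eq, Matrix.diagonal_apply_eq]; ring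
      · rw [Matrix.diagonal_apply_ne _ h, Matrix.diagonal_apply_ne _ h]⟩

lemma isEig_diagEl (t : Fin k → Fin 4 → ℝ) :
    IsEig (diagEl t) (fun i j => if i = j then 1 else 0) t := by
  constructor
  · intro i j
    simp only [dotProduct, Pi.star_apply]
    by_cases h : i = j
    · subst h; simp
    · simp [Finset.sum_ite_eq, h]
  · intro α i
    funext j
    show (Matrix.diagonal (fun i => ((t i α : ℝ) : ℂ) * Complex.I) *ᵥ _) j = _
    rw [Matrix.mulVec_diagonal]
    by_cases h : i = j
    · subst h; simp
    · simp [h, Ne.symm h]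

lemma IsEig.conj_diag {ξ : ADHMAdjointZeroLocus k} {e : Fin k → (Fin k → ℂ)}
    {t : Fin k → Fin 4 → ℝ} (hE : IsEig ξ e t) : unitaryConjRel k (diagEl t) ξ := by
  classical
  set U : Matrix (Fin k) (Fin k) ℂ := Matrix.of (fun i j => e j i) with hU
  have hstar : star U * U = 1 := by
    ext i j
    rw [Matrix.mul_apply, Matrix.one_apply, ← hE.1 i j]
    simp [dotProduct, hU, Matrix.star_apply]
  have hUnit : U ∈ Matrix.unitaryGroup (Fin k) ℂ := by
    rw [Matrix.mem_unitaryGroup_iff, mul_eq_one_comm]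
    exact hstar
  have hUU : U * star U = 1 := Matrix.mem_unitaryGroup_iff.mp hUnit
  refine ⟨⟨U, hUnit⟩, fun α => ?_⟩
  have hMul : ξ.val α * U = U * (diagEl t).val α := by
    ext i j
    have l1 : (ξ.val α * U) i j = ((ξ.val α) *ᵥ e j) i := by
      rw [Matrix.mul_apply]; rfl
    rw [l1, hE.2 α j]
    show (((t j α : ℝ) : ℂ) * Complex.I) * e j i = _
    show _ = (U * Matrix.diagonal (fun i => ((t i α : ℝ) : ℂ) * Complex.I)) i j
    rw [Matrix.mul_diagonal]
    show _ = e j i * (((t j α : ℝ) : ℂ) * Complex.I)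
    ring
  calc ξ.val α = ξ.val α * (U * star U) := by rw [hUU, Matrix.mul_one]
    _ = (ξ.val α * U) * star U := by rw [Matrix.mul_assoc]
    _ = (U * (diagEl t).val α) * star U := by rw [hMul]
    _ = U * (diagEl t).val α * star U := rfl

lemma permRel_equivalence : Equivalence (permRel k) := by
  constructor
  · intro v; exact ⟨1, rfl⟩
  · rintro v w ⟨σ, rfl⟩
    exact ⟨σ.symm, by funext i; simp⟩
  · rintro u v w ⟨σ, rfl⟩ ⟨τ, rfl⟩
    exact ⟨τ.trans σ, rfl⟩

lemma conjRel_equivalence : Equivalence (unitaryConjRel k) := by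
  constructor
  · intro ξ
    refine ⟨1, fun α => ?_⟩
    simp
  · rintro ξ η ⟨U, hα⟩
    refine ⟨U⁻¹, fun α => ?_⟩
    rw [Matrix.UnitaryGroup.inv_apply, hα α]
    have h1 : star (U : Matrix (Fin k) (Fin k) ℂ) * U = 1 := (Unitary.mem_iff.mp U.2).1
    have h2 : (U : Matrix (Fin k) (Fin k) ℂ) * star (U : Matrix (Fin k) (Fin k) ℂ) = 1 :=
      (Unitary.mem_iff.mp U.2).2
    rw [star_star]
    calc (ξ.val α : Matrix (Fin k) (Fin k) ℂ)
        = (star (U : Matrix (Fin k) (Fin k) ℂ) * U) * ξ.val α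
          * (star (U : Matrix (Fin k) (Fin k) ℂ) * U) := by rw [h1]; simp
      _ = star (U : Matrix (Fin k) (Fin k) ℂ) * ((U : Matrix (Fin k) (Fin k) ℂ) * ξ.val α
          * star (U : Matrix (Fin k) (Fin k) ℂ)) * U := by
          simp only [Matrix.mul_assoc]
  · rintro ξ η ζ ⟨U, hU⟩ ⟨W, hW⟩
    refine ⟨W * U, fun α => ?_⟩
    rw [hW α, hU α]
    simp only [Submonoid.coe_mul, star_mul, Matrix.mul_assoc]

def eigE (ξ : ADHMAdjointZeroLocus k) : Fin k → (Fin k → ℂ) := (exists_isEig ξ).choose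

def eigT (ξ : ADHMAdjointZeroLocus k) : Fin k → Fin 4 → ℝ :=
  (exists_isEig ξ).choose_spec.choose

lemma isEig_eig (ξ : ADHMAdjointZeroLocus k) : IsEig ξ (eigE ξ) (eigT ξ) :=
  (exists_isEig ξ).choose_spec.choose_spec

def spec (ξ : ADHMAdjointZeroLocus k) : Quot (permRel k) :=
  Quot.mk _ (fun i => quat (eigT ξ i))

lemma spec_eq {ξ : ADHMAdjointZeroLocus k} {e : Fin k → (Fin k → ℂ)} {t : Fin k → Fin 4 → ℝ}
    (hE : IsEig ξ e t) : spec ξ = Quot.mk _ (fun i => quat (t i)) := by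
  obtain ⟨σ, hσ⟩ := (isEig_eig ξ).exists_perm hE
  exact Quot.sound ⟨σ, by funext j; simp [Function.comp, hσ j]⟩

lemma IsEig.conj {ξ η : ADHMAdjointZeroLocus k} {e : Fin k → (Fin k → ℂ)}
    {t : Fin k → Fin 4 → ℝ} (hE : IsEig ξ e t) (U : Matrix (Fin k) (Fin k) ℂ)
    (hU : U ∈ Matrix.unitaryGroup (Fin k) ℂ)
    (hα : ∀ α, η.val α = U * ξ.val α * star U) :
    IsEig η (fun i => U *ᵥ e i) t := by
  have h1 : star U * U = 1 := (Unitary.mem_iff.mp hU).1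
  constructor
  · intro i j
    rw [Matrix.star_mulVec, ← Matrix.dotProduct_mulVec, Matrix.mulVec_mulVec]
    rw [show Uᴴ = star U from rfl, h1, Matrix.one_mulVec]
    exact hE.1 i j
  · intro α i
    rw [hα α, Matrix.mulVec_mulVec]
    have : U * ξ.val α * star U * U = U * ξ.val α := by
      rw [Matrix.mul_assoc (U * ξ.val α), h1, Matrix.mul_one]
    rw [this, ← Matrix.mulVec_mulVec, hE.2 α i, Matrix.mulVec_smul]

lemma spec_conj {ξ η : ADHMAdjointZeroLocus k} (h : unitaryConjRel k ξ η) :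
    spec ξ = spec η := by
  obtain ⟨U, hα⟩ := h
  rw [spec_eq ((isEig_eig ξ).conj U.1 U.2 hα)]
  rfl

lemma IsEig.perm {ξ : ADHMAdjointZeroLocus k} {f : Fin k → (Fin k → ℂ)}
    {s : Fin k → Fin 4 → ℝ} (hE : IsEig ξ f s) (σ : Equiv.Perm (Fin k)) :
    IsEig ξ (fun i => f (σ i)) (fun i => s (σ i)) := by
  constructor
  · intro i j
    rw [hE.1]
    simp [Equiv.apply_eq_iff_eq]
  · intro α i
    exact hE.2 α (σ i)

lemma spec_inj {ξ η : ADHMAdjointZeroLocus k} (h : spec ξ = spec η) :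
    unitaryConjRel k ξ η := by
  have hrel : permRel k (fun i => quat (eigT ξ i)) (fun i => quat (eigT η i)) :=
    (Equivalence.eqvGen_iff permRel_equivalence).mp (Quot.eq.mp h)
  obtain ⟨σ, hσ⟩ := hrel
  have hts : ∀ j, eigT η j = eigT ξ (σ j) := fun j => quat_injective (congrFun hσ j)
  have h1 : IsEig η (fun i => eigE η (σ.symm i)) (eigT ξ) := by
    have h0 := (isEig_eig η).perm σ.symm
    have : (fun i => eigT η (σ.symm i)) = eigT ξ := by
      funext i
      rw [hts (σ.symm i), Equiv.apply_symm_apply]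
    rwa [this] at h0
  have c1 := (isEig_eig ξ).conj_diag
  have c2 := h1.conj_diag
  exact conjRel_equivalence.trans (conjRel_equivalence.symm c1) c2

end ADHMAux

/-- The hyperkähler quotient of `ℍ ⊗ 𝔲(k)` by the adjoint action of `U(k)` at level
zero is `Sym^k ℍ`: the set of `ξ` with pairwise commuting components, modulo
simultaneous conjugation by `U(k)`, is in natural bijection with `ℍᵏ/S_k` via the
joint spectrum map `ξ ↦ {v₁,…,v_k}`.  (If `e` is an orthonormal eigenbasis with
`ξ_α e_i = (i t_{i,α}) e_i`, then `ξ` is sent to the multiset of quaternions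
`v_i = t_{i,0} + t_{i,1} i + t_{i,2} j + t_{i,3} k`.) -/


theorem hyperkahler_quotient_adjoint_action_is_sym_k_H (k : ℕ) :
    ∃ F : Quot (unitaryConjRel k) ≃ Quot (permRel k),
      ∀ (ξ : ADHMAdjointZeroLocus k) (e : Fin k → (Fin k → ℂ)) (t : Fin k → Fin 4 → ℝ),
        (∀ i j, star (e i) ⬝ᵥ e j = if i = j then 1 else 0) →
        (∀ α i, (ξ.val α) *ᵥ e i = (((t i α : ℝ) : ℂ) * Complex.I) • e i) →
        F (Quot.mk _ ξ)
          = Quot.mk _ (fun i => (⟨t i 0, t i 1, t i 2, t i 3⟩ : Quaternion ℝ)) := by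
  classical
  refine ⟨Equiv.ofBijective
    (Quot.lift (fun ξ => ADHMAux.spec ξ) (fun a b h => ADHMAux.spec_conj h)) ⟨?_, ?_⟩, ?_⟩
  · intro x y
    induction x using Quot.ind with
    | _ ξ =>
      induction y using Quot.ind with
      | _ η =>
        intro h
        exact Quot.sound (ADHMAux.spec_inj h)
  · intro y
    induction y using Quot.ind with
    | _ v =>
      refine ⟨Quot.mk _ (ADHMAux.diagEl (fun i => ADHMAux.comp' (v i))), ?_⟩
      show ADHMAux.spec _ = _
      rw [ADHMAux.spec_eq (ADHMAux.isEig_diagEl _)]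
      have hv : (fun i => ADHMAux.quat (ADHMAux.comp' (v i))) = v :=
        funext fun i => ADHMAux.quat_comp' (v i)
      rw [hv]
  · intro ξ e t horth heig
    show ADHMAux.spec ξ = _
    rw [ADHMAux.spec_eq ⟨horth, heig⟩]
    rfl
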